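/- arXiv:2405.07552 — 8 statements merged into one kernel-verified Lean document; each statement's English description precedes it below -/
import Mathlib

section
/- Suppose |A β* − a|_∞ ≤ λ/2 and that δᵀAδ ≥ α|δ|₂² for every δ ∈ ℝ^p with |δ|₁ ≤ 4√s·|δ|₂, where α > 0. Then every global minimizer β̂ of F satisfies |β̂ − β*|₂ ≤ 6 α⁻¹ √s λ. -/
open Matrix Finset

noncomputable def l1 {p : ℕ} (v : Fin p → ℝ) : ℝ := ∑ j, |v j|

noncomputable def l2 {p : ℕ} (v : Fin p → ℝ) : ℝ := Real.sqrt (∑ j, (v j) ^ 2)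

noncomputable def Fobj {p : ℕ} (A : Matrix (Fin p) (Fin p) ℝ) (a : Fin p → ℝ)
    (lam : ℝ) (β : Fin p → ℝ) : ℝ :=
  (1 / 2) * (β ⬝ᵥ A.mulVec β) - β ⬝ᵥ a + lam * l1 β

noncomputable def supp {p : ℕ} (v : Fin p → ℝ) : Finset (Fin p) :=
  Finset.univ.filter fun j => v j ≠ 0

lemma dot_sym {p : ℕ} {A : Matrix (Fin p) (Fin p) ℝ} (hA : A.PosSemidef)
    (x y : Fin p → ℝ) : x ⬝ᵥ A.mulVec x + 2 * (x ⬝ᵥ A.mulVec y) =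
      x ⬝ᵥ A.mulVec x + (x ⬝ᵥ A.mulVec y) + (y ⬝ᵥ A.mulVec x) := by
  have hsym : y ⬝ᵥ A.mulVec x = x ⬝ᵥ A.mulVec y := by
    have hAt : Aᵀ = A := by
      have := hA.isHermitian
      rwa [Matrix.IsHermitian, Matrix.conjTranspose_eq_transpose_of_trivial] at this
    rw [Matrix.dotProduct_mulVec, ← Matrix.mulVec_transpose, hAt, dotProduct_comm]
  rw [hsym]; ring

set_option maxHeartbeats 1000000 in
/-- if `|Aβ* − a|_∞ ≤ λ/2` and the restricted eigenvalue condition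
`δᵀAδ ≥ α|δ|₂²` holds for all `δ` with `|δ|₁ ≤ 4√s|δ|₂`, then every global minimizer
`β̂` of the ℓ1-penalized quadratic objective satisfies `|β̂ − β*|₂ ≤ 6 α⁻¹ √s λ`. -/
theorem stmt0 {p : ℕ} (hp : 1 ≤ p) (A : Matrix (Fin p) (Fin p) ℝ) (hA : A.PosSemidef)
    (a βstar : Fin p → ℝ) (lam α : ℝ) (hlam : 0 < lam) (hα : 0 < α)
    (h1 : ∀ j, |(A.mulVec βstar - a) j| ≤ lam / 2)
    (h2 : ∀ δ : Fin p → ℝ,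
      l1 δ ≤ 4 * Real.sqrt ((supp βstar).card) * l2 δ →
      α * (l2 δ) ^ 2 ≤ δ ⬝ᵥ A.mulVec δ)
    (βhat : Fin p → ℝ) (hmin : ∀ β, Fobj A a lam βhat ≤ Fobj A a lam β) :
    l2 (βhat - βstar) ≤ 6 * α⁻¹ * Real.sqrt ((supp βstar).card) * lam := by
  set δ : Fin p → ℝ := βhat - βstar with hδ
  set S : Finset (Fin p) := supp βstar with hS
  set rs : ℝ := Real.sqrt (S.card) with hrs
  have hrs0 : 0 ≤ rs := Real.sqrt_nonneg _
  set x : ℝ := l2 δ with hx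
  have hx0 : 0 ≤ x := Real.sqrt_nonneg _
  set Q : ℝ := δ ⬝ᵥ A.mulVec δ with hQ
  have hQ0 : 0 ≤ Q := by have := hA.dotProduct_mulVec_nonneg δ; rwa [star_trivial] at this
  set u : ℝ := ∑ j ∈ S, |δ j| with hu
  set w : ℝ := ∑ j ∈ Sᶜ, |δ j| with hw
  have hu0 : 0 ≤ u := Finset.sum_nonneg fun _ _ => abs_nonneg _
  have hw0 : 0 ≤ w := Finset.sum_nonneg fun _ _ => abs_nonneg _
  have hl1 : l1 δ = u + w := by
    rw [hu, hw, l1, ← Finset.sum_add_sum_compl S]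
  -- expansion of the quadratic form
  have hβ : βhat = βstar + δ := by ext j; simp [hδ]
  have hexp : βhat ⬝ᵥ A.mulVec βhat =
      βstar ⬝ᵥ A.mulVec βstar + 2 * (δ ⬝ᵥ A.mulVec βstar) + Q := by
    rw [hβ, hQ]
    simp only [Matrix.mulVec_add, dotProduct_add, add_dotProduct]
    have := dot_sym hA δ βstar
    linarith
  have ha : βhat ⬝ᵥ a = βstar ⬝ᵥ a + δ ⬝ᵥ a := by
    rw [hβ, add_dotProduct]
  -- step A: basic inequality from minimality
  have hstepA : (1/2) * Q + δ ⬝ᵥ (A.mulVec βstar - a) ≤ lam * (l1 βstar - l1 βhat) := by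
    have := hmin βstar
    rw [Fobj, Fobj, hexp, ha] at this
    have hsub : δ ⬝ᵥ (A.mulVec βstar - a) = δ ⬝ᵥ A.mulVec βstar - δ ⬝ᵥ a :=
      dotProduct_sub δ _ _
    linarith
  -- step B: |δ ⬝ᵥ c| bound
  have hstepB : -((lam/2) * (u + w)) ≤ δ ⬝ᵥ (A.mulVec βstar - a) := by
    rw [← hl1]
    have hb : |δ ⬝ᵥ (A.mulVec βstar - a)| ≤ (lam/2) * l1 δ := by
      calc |δ ⬝ᵥ (A.mulVec βstar - a)| ≤ ∑ j, |δ j * (A.mulVec βstar - a) j| :=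
            Finset.abs_sum_le_sum_abs _ _
        _ ≤ ∑ j, |δ j| * (lam/2) := by
            refine Finset.sum_le_sum fun j _ => ?_
            rw [abs_mul]
            exact mul_le_mul_of_nonneg_left (h1 j) (abs_nonneg _)
        _ = (lam/2) * l1 δ := by rw [l1, ← Finset.sum_mul]; ring
    linarith [neg_abs_le (δ ⬝ᵥ (A.mulVec βstar - a))]
  -- step C: l1 decomposition
  have hstepC : l1 βstar - l1 βhat ≤ u - w := by
    have hsplit : l1 βstar - l1 βhat = ∑ j ∈ S, (|βstar j| - |βhat j|)
        + ∑ j ∈ Sᶜ, (|βstar j| - |βhat j|) := by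
      rw [Finset.sum_add_sum_compl S, l1, l1, Finset.sum_sub_distrib]
    rw [hsplit]
    have h1' : ∑ j ∈ S, (|βstar j| - |βhat j|) ≤ u := by
      refine Finset.sum_le_sum fun j _ => ?_
      have : |βstar j| - |βhat j| ≤ |βstar j - βhat j| := abs_sub_abs_le_abs_sub _ _
      have heq : |βstar j - βhat j| = |δ j| := by
        rw [abs_sub_comm]; simp [hδ]
      linarith [heq ▸ this]
    have h2' : ∑ j ∈ Sᶜ, (|βstar j| - |βhat j|) = -w := by
      rw [hw, ← Finset.sum_neg_distrib]
      refine Finset.sum_congr rfl fun j hj => ?_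
      have hj0 : βstar j = 0 := by
        simp only [hS, supp, Finset.mem_compl, Finset.mem_filter, Finset.mem_univ,
          true_and, not_not] at hj
        exact hj
      simp [hδ, hj0]
    linarith
  -- combine: (1/2) Q ≤ (3λ/2) u − (λ/2) w
  have hcomb : (1/2) * Q ≤ (3*lam/2) * u - (lam/2) * w := by
    have := hstepA
    have hC := mul_le_mul_of_nonneg_left hstepC (le_of_lt hlam)
    linarith
  -- Cauchy–Schwarz: u ≤ rs * x
  have hcauchy : u ≤ rs * x := by
    have hsq : u^2 ≤ (S.card : ℝ) * ∑ j ∈ S, |δ j| ^ 2 := by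
      rw [hu]; exact sq_sum_le_card_mul_sum_sq
    have hle : ∑ j ∈ S, |δ j| ^ 2 ≤ ∑ j, (δ j)^2 := by
      have habs : ∀ j, |δ j|^2 = (δ j)^2 := fun j => sq_abs _
      simp_rw [habs]
      exact Finset.sum_le_sum_of_subset_of_nonneg (Finset.subset_univ S)
        fun j _ _ => sq_nonneg _
    have hsq2 : u^2 ≤ (S.card : ℝ) * ∑ j, (δ j)^2 := by
      refine hsq.trans (mul_le_mul_of_nonneg_left hle (Nat.cast_nonneg _))
    have : u = Real.sqrt (u^2) := (Real.sqrt_sq hu0).symm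
    rw [this, hrs, hx, l2, ← Real.sqrt_mul (Nat.cast_nonneg _)]
    exact Real.sqrt_le_sqrt hsq2
  -- w ≤ 3u, hence l1 δ ≤ 4u ≤ 4 rs x
  have hw3u : w ≤ 3 * u := by nlinarith
  have hl1b : l1 δ ≤ 4 * rs * x := by
    rw [hl1]; nlinarith
  have hRE : α * x^2 ≤ Q := h2 δ hl1b
  have hQle : Q ≤ 3 * lam * rs * x := by nlinarith
  -- finish
  rw [show 6 * α⁻¹ * rs * lam = 6 * rs * lam / α by field_simp, le_div_iff₀ hα]
  rcases eq_or_lt_of_le hx0 with h0 | h0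
  · linarith [congrArg (· * α) h0.symm, mul_nonneg hrs0 hlam.le]
  · have key : α * x * x ≤ 3 * lam * rs * x := by
      calc α * x * x = α * x ^ 2 := by ring
        _ ≤ Q := hRE
        _ ≤ 3 * lam * rs * x := hQle
    have key2 : α * x ≤ 3 * lam * rs := le_of_mul_le_mul_right key h0
    have hrl : 0 ≤ rs * lam := mul_nonneg hrs0 hlam.le
    calc x * α = α * x := by ring
      _ ≤ 3 * lam * rs := key2
      _ ≤ 6 * rs * lam := by nlinarith
end

section
/- If |Aβ* − a|_∞ ≤ λ/2, then every global minimizer β̂ of F satisfies |(β̂ − β*)_{Sᶜ}|₁ ≤ 3 |(β̂ − β*)_S|₁. -/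
open Matrix Finset

/-- `restr v T` agrees with `v` on `T` and is zero outside `T`. -/
noncomputable def restr {p : ℕ} (v : Fin p → ℝ) (T : Finset (Fin p)) : Fin p → ℝ :=
  fun j => if j ∈ T then v j else 0

lemma l1_restr {p : ℕ} (v : Fin p → ℝ) (T : Finset (Fin p)) :
    l1 (restr v T) = ∑ j ∈ T, |v j| := by
  unfold l1 restr
  rw [← Finset.sum_filter_add_sum_filter_not Finset.univ (fun j => j ∈ T)]
  have h1 : ∀ j ∈ Finset.univ.filter (fun j => j ∈ T), |if j ∈ T then v j else 0| = |v j| := by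
    intro j hj; simp at hj; simp [hj]
  have h2 : ∀ j ∈ Finset.univ.filter (fun j => ¬ j ∈ T), |if j ∈ T then v j else 0| = 0 := by
    intro j hj; simp at hj; simp [hj]
  rw [Finset.sum_congr rfl h1, Finset.sum_congr rfl h2, Finset.sum_const_zero, add_zero]
  congr 1
  ext j; simp

/-- if `|Aβ* − a|_∞ ≤ λ/2`, then every global minimizer `β̂` of `F`
satisfies the cone condition `|(β̂ − β*)_{Sᶜ}|₁ ≤ 3 |(β̂ − β*)_S|₁`. -/
theorem stmt3 {p : ℕ} (hp : 1 ≤ p) (A : Matrix (Fin p) (Fin p) ℝ) (hA : A.PosSemidef)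
    (a βstar : Fin p → ℝ) (lam : ℝ) (hlam : 0 < lam)
    (h1 : ∀ j, |(A.mulVec βstar - a) j| ≤ lam / 2)
    (βhat : Fin p → ℝ) (hmin : ∀ β, Fobj A a lam βhat ≤ Fobj A a lam β) :
    l1 (restr (βhat - βstar) (supp βstar)ᶜ) ≤ 3 * l1 (restr (βhat - βstar) (supp βstar)) := by
  set d : Fin p → ℝ := βhat - βstar with hd
  set S : Finset (Fin p) := supp βstar with hS
  set c : Fin p → ℝ := A.mulVec βstar - a with hc
  -- symmetry of A
  have hAsymm : ∀ i j, A i j = A j i := by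
    intro i j
    have := congrFun (congrFun hA.1 j) i
    simpa [Matrix.conjTranspose_apply] using this
  have hsym : ∀ x y : Fin p → ℝ, x ⬝ᵥ A.mulVec y = y ⬝ᵥ A.mulVec x := by
    intro x y
    simp only [Matrix.mulVec, dotProduct, Finset.mul_sum]
    rw [Finset.sum_comm]
    apply Finset.sum_congr rfl
    intro i _
    apply Finset.sum_congr rfl
    intro j _
    rw [hAsymm j i]; ring
  have hQ : 0 ≤ d ⬝ᵥ A.mulVec d := by simpa using hA.dotProduct_mulVec_nonneg d
  -- expansion
  have hb : βhat = βstar + d := by ext j; simp [hd]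
  have expand : βhat ⬝ᵥ A.mulVec βhat
      = βstar ⬝ᵥ A.mulVec βstar + 2 * (d ⬝ᵥ A.mulVec βstar) + d ⬝ᵥ A.mulVec d := by
    rw [hb]
    simp [Matrix.mulVec_add, dotProduct_add, add_dotProduct, hsym βstar d]
    ring
  have expa : βhat ⬝ᵥ a = βstar ⬝ᵥ a + d ⬝ᵥ a := by
    rw [hb, add_dotProduct]
  have hdc : d ⬝ᵥ c = d ⬝ᵥ A.mulVec βstar - d ⬝ᵥ a := by
    rw [hc, dotProduct_sub]
  -- the basic inequality
  have key : (1/2) * (d ⬝ᵥ A.mulVec d) + d ⬝ᵥ c + lam * l1 βhat ≤ lam * l1 βstar := by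
    have := hmin βstar
    unfold Fobj at this
    rw [expand, expa] at this
    rw [hdc]
    linarith
  -- |d ⬝ᵥ c| ≤ (lam/2) * l1 d
  have hbound : |d ⬝ᵥ c| ≤ (lam / 2) * l1 d := by
    calc |d ⬝ᵥ c| ≤ ∑ j, |d j * c j| := by
          exact Finset.abs_sum_le_sum_abs _ _
      _ ≤ ∑ j, |d j| * (lam / 2) := by
          apply Finset.sum_le_sum
          intro j _
          rw [abs_mul]
          exact mul_le_mul_of_nonneg_left (h1 j) (abs_nonneg _)
      _ = (lam / 2) * l1 d := by rw [l1, ← Finset.sum_mul]; ring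
  -- split l1 d
  have hsplit : l1 d = (∑ j ∈ S, |d j|) + ∑ j ∈ Sᶜ, |d j| := by
    rw [l1, ← Finset.sum_add_sum_compl S]
  -- l1 βstar is supported on S
  have hstar : l1 βstar = ∑ j ∈ S, |βstar j| := by
    rw [l1, ← Finset.sum_add_sum_compl S (fun j => |βstar j|)]
    have : ∑ j ∈ Sᶜ, |βstar j| = 0 := by
      apply Finset.sum_eq_zero
      intro j hj
      have : βstar j = 0 := by
        simp [hS, supp] at hj
        exact hj
      simp [this]
    rw [this, add_zero]
  -- lower bound on l1 βhat
  have hhat : (∑ j ∈ S, |βstar j|) - (∑ j ∈ S, |d j|) + ∑ j ∈ Sᶜ, |d j| ≤ l1 βhat := by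
    rw [l1, ← Finset.sum_add_sum_compl S (fun j => |βhat j|)]
    have e1 : ∑ j ∈ S, (|βstar j| - |d j|) ≤ ∑ j ∈ S, |βhat j| := by
      apply Finset.sum_le_sum
      intro j _
      have : βhat j = βstar j + d j := by rw [hb]; simp
      rw [this]
      have := abs_sub_abs_le_abs_sub (βstar j) (-(d j))
      simp at this
      calc |βstar j| - |d j| ≤ |βstar j + d j| := by
            have h := abs_add_le (βstar j + d j) (-(d j))
            simp at h
            have : |βstar j| ≤ |βstar j + d j| + |d j| := by
              calc |βstar j| = |(βstar j + d j) + (-(d j))| := by ring_nf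
                _ ≤ |βstar j + d j| + |(-(d j))| := abs_add_le _ _
                _ = |βstar j + d j| + |d j| := by rw [abs_neg]
            linarith
        _ = |βstar j + d j| := rfl
    have e2 : ∑ j ∈ Sᶜ, |d j| = ∑ j ∈ Sᶜ, |βhat j| := by
      apply Finset.sum_congr rfl
      intro j hj
      have hz : βstar j = 0 := by
        simp [hS, supp] at hj
        exact hj
      have : βhat j = d j := by
        have : βhat j = βstar j + d j := by rw [hb]; simp
        rw [this, hz, zero_add]
      rw [this]
    rw [Finset.sum_sub_distrib] at e1
    linarith
  -- conclude
  rw [l1_restr, l1_restr]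
  set α := ∑ j ∈ S, |d j|
  set γ := ∑ j ∈ Sᶜ, |d j|
  have hα : 0 ≤ α := Finset.sum_nonneg fun j _ => abs_nonneg _
  have hγ : 0 ≤ γ := Finset.sum_nonneg fun j _ => abs_nonneg _
  have habs : -((lam/2) * l1 d) ≤ d ⬝ᵥ c := by
    linarith [neg_abs_le (d ⬝ᵥ c), hbound]
  have : lam * ((∑ j ∈ S, |βstar j|) - α + γ) ≤ lam * l1 βstar + (lam/2) * l1 d := by
    have h2 := mul_le_mul_of_nonneg_left hhat (le_of_lt hlam)
    linarith [key, habs]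
  rw [hstar, hsplit] at this
  nlinarith [this, hlam]
end

section
/- If |Aβ* − a|_∞ ≤ λ/2, then every global minimizer β̂ of F satisfies |β̂ − β*|₁ ≤ 4 √s · |β̂ − β*|₂. -/
open Matrix Finset

/-- if `|Aβ* − a|_∞ ≤ λ/2`, then every global minimizer `β̂` of `F`
satisfies `|β̂ − β*|₁ ≤ 4 √s |β̂ − β*|₂`, where `s = |S|`. -/
theorem stmt4 {p : ℕ} (hp : 1 ≤ p) (A : Matrix (Fin p) (Fin p) ℝ) (hA : A.PosSemidef)
    (a βstar : Fin p → ℝ) (lam : ℝ) (hlam : 0 < lam)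
    (h1 : ∀ j, |(A.mulVec βstar - a) j| ≤ lam / 2)
    (βhat : Fin p → ℝ) (hmin : ∀ β, Fobj A a lam βhat ≤ Fobj A a lam β) :
    l1 (βhat - βstar) ≤ 4 * Real.sqrt ((supp βstar).card) * l2 (βhat - βstar) := by
  classical
  set S : Finset (Fin p) := supp βstar with hSdef
  set h : Fin p → ℝ := βhat - βstar with hhdef
  have hAT : Aᵀ = A := by
    have := hA.1
    rw [Matrix.IsHermitian] at this
    simpa using this
  have hAsymm : ∀ u v : Fin p → ℝ, u ⬝ᵥ A.mulVec v = v ⬝ᵥ A.mulVec u := by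
    intro u v
    rw [Matrix.dotProduct_mulVec, ← Matrix.mulVec_transpose, hAT, dotProduct_comm]
  have hq : 0 ≤ h ⬝ᵥ A.mulVec h := by simpa using hA.dotProduct_mulVec_nonneg h
  have hb : βhat = βstar + h := by ext j; simp [hhdef]
  have expand : Fobj A a lam βhat - Fobj A a lam βstar
      = (1 / 2) * (h ⬝ᵥ A.mulVec h) + h ⬝ᵥ (A.mulVec βstar - a)
        + lam * (l1 βhat - l1 βstar) := by
    conv_lhs => rw [Fobj, Fobj, hb]
    rw [show l1 (βstar + h) = l1 βhat by rw [← hb]]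
    simp only [Matrix.mulVec_add, dotProduct_add, add_dotProduct, dotProduct_sub,
      hAsymm βstar h]
    ring
  have hkey : (1 / 2) * (h ⬝ᵥ A.mulVec h) + h ⬝ᵥ (A.mulVec βstar - a)
      + lam * (l1 βhat - l1 βstar) ≤ 0 := by
    have := hmin βstar; linarith [expand]
  have hdot : |h ⬝ᵥ (A.mulVec βstar - a)| ≤ (lam / 2) * l1 h := by
    calc |h ⬝ᵥ (A.mulVec βstar - a)| = |∑ j, h j * (A.mulVec βstar - a) j| := rfl
      _ ≤ ∑ j, |h j * (A.mulVec βstar - a) j| := Finset.abs_sum_le_sum_abs _ _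
      _ ≤ ∑ j, |h j| * (lam / 2) := by
          apply Finset.sum_le_sum
          intro j _
          rw [abs_mul]
          exact mul_le_mul_of_nonneg_left (h1 j) (abs_nonneg _)
      _ = (lam / 2) * l1 h := by rw [l1, ← Finset.sum_mul]; ring
  have hstep : lam * (l1 βhat - l1 βstar) ≤ (lam / 2) * l1 h := by
    have h2 : -(h ⬝ᵥ (A.mulVec βstar - a)) ≤ (lam / 2) * l1 h := by
      have := neg_abs_le (h ⬝ᵥ (A.mulVec βstar - a)); linarith [hdot]
    linarith
  -- split l1 over S and Sᶜ
  have split : ∀ v : Fin p → ℝ, l1 v = ∑ j ∈ S, |v j| + ∑ j ∈ Sᶜ, |v j| := by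
    intro v; rw [l1, ← Finset.sum_add_sum_compl S]
  have hSc0 : ∀ j ∈ Sᶜ, βstar j = 0 := by
    intro j hj
    rw [Finset.mem_compl] at hj
    by_contra hne
    exact hj (by simp [hSdef, supp, hne])
  set a1 : ℝ := ∑ j ∈ S, |h j| with ha1
  set a2 : ℝ := ∑ j ∈ Sᶜ, |h j| with ha2
  have ha1nn : 0 ≤ a1 := Finset.sum_nonneg fun j _ => abs_nonneg _
  have hl1h : l1 h = a1 + a2 := split h
  have hlb : l1 βstar - a1 + a2 ≤ l1 βhat := by
    rw [split βhat, split βstar]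
    have hS' : ∑ j ∈ S, |βstar j| - a1 ≤ ∑ j ∈ S, |βhat j| := by
      rw [ha1, ← Finset.sum_sub_distrib]
      apply Finset.sum_le_sum
      intro j _
      have h1' : |βstar j| - |βhat j| ≤ |βstar j - βhat j| := abs_sub_abs_le_abs_sub _ _
      have h2' : |βstar j - βhat j| = |h j| := by
        rw [hhdef]; simp [abs_sub_comm]
      linarith
    have hSc1 : ∑ j ∈ Sᶜ, |βstar j| = 0 := by
      apply Finset.sum_eq_zero; intro j hj; rw [hSc0 j hj]; simp
    have hSc2 : ∑ j ∈ Sᶜ, |βhat j| = a2 := by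
      rw [ha2]; apply Finset.sum_congr rfl
      intro j hj
      rw [hhdef]
      simp [hSc0 j hj]
    linarith
  have hcone : a2 ≤ 3 * a1 := by
    have h3 : lam * (-a1 + a2) ≤ (lam / 2) * (a1 + a2) := by
      have : lam * (l1 βstar - a1 + a2 - l1 βstar) ≤ lam * (l1 βhat - l1 βstar) :=
        mul_le_mul_of_nonneg_left (by linarith) (le_of_lt hlam)
      calc lam * (-a1 + a2) = lam * (l1 βstar - a1 + a2 - l1 βstar) := by ring
        _ ≤ lam * (l1 βhat - l1 βstar) := this
        _ ≤ (lam / 2) * l1 h := hstep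
        _ = (lam / 2) * (a1 + a2) := by rw [hl1h]
    nlinarith
  have hl1le : l1 h ≤ 4 * a1 := by rw [hl1h]; linarith
  -- Cauchy-Schwarz on S
  have hCS : a1 ≤ Real.sqrt S.card * l2 h := by
    have hcs := Real.sum_mul_le_sqrt_mul_sqrt S (fun _ => (1 : ℝ)) (fun j => |h j|)
    simp only [one_mul, one_pow, sq_abs] at hcs
    have h4 : ∑ j ∈ S, (1 : ℝ) = S.card := by simp
    have h5 : Real.sqrt (∑ j ∈ S, h j ^ 2) ≤ l2 h := by
      rw [l2]
      apply Real.sqrt_le_sqrt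
      exact Finset.sum_le_sum_of_subset_of_nonneg (Finset.subset_univ S)
        (fun j _ _ => sq_nonneg _)
    calc a1 ≤ Real.sqrt (∑ j ∈ S, (1 : ℝ)) * Real.sqrt (∑ j ∈ S, h j ^ 2) := hcs
      _ = Real.sqrt S.card * Real.sqrt (∑ j ∈ S, h j ^ 2) := by rw [h4]
      _ ≤ Real.sqrt S.card * l2 h := by
          exact mul_le_mul_of_nonneg_left h5 (Real.sqrt_nonneg _)
  calc l1 h ≤ 4 * a1 := hl1le
    _ ≤ 4 * (Real.sqrt S.card * l2 h) := by linarith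
    _ = 4 * Real.sqrt S.card * l2 h := by ring
end

section
/- If |Aβ* − a|_∞ ≤ λ/2, then every global minimizer β̂ of F satisfies |A(β̂ − β*)|_∞ ≤ 3λ/2. -/
set_option maxHeartbeats 1000000


open Matrix Finset

lemma symm_dot {p : ℕ} {A : Matrix (Fin p) (Fin p) ℝ} (hA : A.IsHermitian)
    (x y : Fin p → ℝ) : x ⬝ᵥ A.mulVec y = y ⬝ᵥ A.mulVec x := by
  simp only [dotProduct, mulVec, dotProduct, Finset.mul_sum]
  rw [Finset.sum_comm]
  refine Finset.sum_congr rfl fun i _ => Finset.sum_congr rfl fun k _ => ?_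
  have h2 := hA.apply k i
  simp only [id_eq, star, RingHom.id_apply] at h2
  rw [← h2]; ring

/-- if `|Aβ* − a|_∞ ≤ λ/2`, then every global minimizer `β̂` of `F`
satisfies `|A(β̂ − β*)|_∞ ≤ 3λ/2`. -/
theorem stmt6 {p : ℕ} (hp : 1 ≤ p) (A : Matrix (Fin p) (Fin p) ℝ) (hA : A.PosSemidef)
    (a βstar : Fin p → ℝ) (lam : ℝ) (hlam : 0 < lam)
    (h1 : ∀ j, |(A.mulVec βstar - a) j| ≤ lam / 2)
    (βhat : Fin p → ℝ) (hmin : ∀ β, Fobj A a lam βhat ≤ Fobj A a lam β) :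
    ∀ j, |(A.mulVec (βhat - βstar)) j| ≤ 3 * lam / 2 := by
  intro j
  set g : Fin p → ℝ := A.mulVec βhat - a with hg
  -- diagonal nonneg
  have hd : 0 ≤ A j j := by
    exact hA.diag_nonneg
  -- key inequality : ∀ t, 0 ≤ t * g j + t^2 * A j j / 2 + lam * |t|
  have key : ∀ t : ℝ, 0 ≤ t * g j + t ^ 2 * A j j / 2 + lam * |t| := by
    intro t
    set β' : Fin p → ℝ := βhat + Pi.single j t with hβ'
    have h := hmin β'
    have hquad : β' ⬝ᵥ A.mulVec β'
        = βhat ⬝ᵥ A.mulVec βhat + 2 * t * A.mulVec βhat j + t ^ 2 * A j j := by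
      rw [hβ', add_dotProduct, mulVec_add, dotProduct_add, dotProduct_add]
      rw [symm_dot hA.1 βhat (Pi.single j t)]
      simp [single_dotProduct, dotProduct_single, mulVec_single]
      ring
    have hlin : β' ⬝ᵥ a = βhat ⬝ᵥ a + t * a j := by
      rw [hβ', add_dotProduct, single_dotProduct]
    have hl1 : l1 β' ≤ l1 βhat + |t| := by
      rw [hβ']
      unfold l1
      have : ∀ i ∈ Finset.univ, |((βhat + Pi.single j t : Fin p → ℝ)) i|
          ≤ |βhat i| + (if i = j then |t| else 0) := by
        intro i _
        by_cases hij : i = j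
        · subst hij; simp [Pi.single_eq_same]; exact abs_add_le _ _
        · simp [hij, Pi.single_eq_of_ne hij]
      calc ∑ i, |((βhat + Pi.single j t : Fin p → ℝ)) i|
          ≤ ∑ i, (|βhat i| + (if i = j then |t| else 0)) := Finset.sum_le_sum this
        _ = ∑ i, |βhat i| + |t| := by rw [Finset.sum_add_distrib]; simp
    have hdiff : Fobj A a lam βhat ≤ Fobj A a lam βhat
        + (t * g j + t ^ 2 * A j j / 2 + lam * |t|) := by
      calc Fobj A a lam βhat ≤ Fobj A a lam β' := h
        _ = (1/2) * (βhat ⬝ᵥ A.mulVec βhat + 2 * t * A.mulVec βhat j + t ^ 2 * A j j)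
            - (βhat ⬝ᵥ a + t * a j) + lam * l1 β' := by
            rw [Fobj, hquad, hlin]
        _ ≤ (1/2) * (βhat ⬝ᵥ A.mulVec βhat + 2 * t * A.mulVec βhat j + t ^ 2 * A j j)
            - (βhat ⬝ᵥ a + t * a j) + lam * (l1 βhat + |t|) := by
            have := mul_le_mul_of_nonneg_left hl1 hlam.le
            linarith
        _ = Fobj A a lam βhat + (t * g j + t ^ 2 * A j j / 2 + lam * |t|) := by
            rw [Fobj, hg]; simp [Pi.sub_apply]; ring
    linarith
  -- deduce |g j| ≤ lam
  have hgj : |g j| ≤ lam := by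
    have hε : ∀ ε : ℝ, 0 < ε → |g j| ≤ lam + ε * A j j / 2 := by
      intro ε hε
      have k1 := key ε
      have k2 := key (-ε)
      rw [abs_of_pos hε] at k1
      rw [abs_neg, abs_of_pos hε] at k2
      have hε2 : ε ^ 2 = ε * ε := sq ε
      rw [abs_le]
      constructor <;> nlinarith
    by_contra hcon
    push_neg at hcon
    have hδ : 0 < (|g j| - lam) / (A j j + 1) := div_pos (by linarith) (by linarith)
    have := hε _ hδ
    have h2 : (|g j| - lam) / (A j j + 1) * A j j / 2 < |g j| - lam := by
      rw [div_mul_eq_mul_div, div_div]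
      rw [div_lt_iff₀ (by positivity)]
      nlinarith
    linarith
  have hstar := h1 j
  have : (A.mulVec (βhat - βstar)) j = g j - (A.mulVec βstar - a) j := by
    simp only [hg, Pi.sub_apply, mulVec_sub]
    ring
  rw [this]
  calc |g j - (A.mulVec βstar - a) j| ≤ |g j| + |(A.mulVec βstar - a) j| := abs_sub _ _
    _ ≤ lam + lam / 2 := add_le_add hgj hstar
    _ = 3 * lam / 2 := by ring
end

section
/- Suppose there exist t > 0 and B̄ > 0 such that Σᵢ₌₁ᴺ E[ξᵢ² exp(t|ξᵢ|)] ≤ B̄². Then for every x with 0 < x ≤ B̄, P(Σᵢ₌₁ᴺ ξᵢ ≥ (t + t⁻¹)·B̄·x) ≤ exp(−x²). -/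
open MeasureTheory ProbabilityTheory

lemma exp_le_key (v : ℝ) : Real.exp v ≤ 1 + v + v ^ 2 * Real.exp |v| := by
  rcases le_or_gt |v| 1 with h | h
  · have h2 := (abs_le.1 (Real.abs_exp_sub_one_sub_id_le h)).2
    nlinarith [Real.one_le_exp (abs_nonneg v), sq_nonneg v]
  · rcases le_or_gt 0 v with hv | hv
    · rw [abs_of_nonneg hv] at h ⊢
      nlinarith [Real.exp_pos v, mul_nonneg (by nlinarith : (0:ℝ) ≤ v ^ 2 - 1) (Real.exp_pos v).le]
    · rw [abs_of_neg hv] at h ⊢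
      nlinarith [Real.exp_le_one_iff.2 hv.le, Real.one_le_exp (by linarith : (0:ℝ) ≤ -v)]

lemma iIndepFun_ae_congr {Ω : Type*} [MeasurableSpace Ω] {P : Measure Ω}
    {N : ℕ} {f g : Fin N → Ω → ℝ}
    (h : iIndepFun f P)
    (hfg : ∀ i, f i =ᵐ[P] g i) : iIndepFun g P := by
  rw [iIndepFun_iff_measure_inter_preimage_eq_mul] at h ⊢
  have hae : ∀ᵐ ω ∂P, ∀ i, f i ω = g i ω := ae_all_iff.2 hfg
  intro S sets hsets
  have h1 : ∀ i, P (g i ⁻¹' sets i) = P (f i ⁻¹' sets i) := fun i =>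
    measure_congr (Filter.eventuallyEq_set.2 ((hfg i).mono fun ω hω => by
      simp [Set.mem_preimage, hω]))
  have h2 : P (⋂ i ∈ S, g i ⁻¹' sets i) = P (⋂ i ∈ S, f i ⁻¹' sets i) :=
    measure_congr (Filter.eventuallyEq_set.2 (hae.mono fun ω hω => by
      simp only [Set.mem_iInter, Set.mem_preimage, hω]))
  rw [h2, h S hsets]
  exact Finset.prod_congr rfl fun i _ => (h1 i).symm

/-- a Bernstein-type inequality. If `ξ₁, …, ξ_N` are independent,
integrable, mean-zero random variables and there are `t > 0`, `B̄ > 0` with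
`Σᵢ E[ξᵢ² exp(t|ξᵢ|)] ≤ B̄²`, then for every `0 < x ≤ B̄` we have
`P(Σᵢ ξᵢ ≥ (t + t⁻¹) B̄ x) ≤ exp(−x²)`. -/
theorem stmt8 {Ω : Type*} [MeasurableSpace Ω] (P : Measure Ω) [IsProbabilityMeasure P]
    (N : ℕ) (ξ : Fin N → Ω → ℝ)
    (hindep : iIndepFun ξ P)
    (hint : ∀ i, Integrable (ξ i) P)
    (hmean : ∀ i, ∫ ω, ξ i ω ∂P = 0)
    (t B : ℝ) (ht : 0 < t) (hB : 0 < B)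
    (hint2 : ∀ i, Integrable (fun ω => (ξ i ω) ^ 2 * Real.exp (t * |ξ i ω|)) P)
    (hbound : ∑ i, ∫ ω, (ξ i ω) ^ 2 * Real.exp (t * |ξ i ω|) ∂P ≤ B ^ 2) :
    ∀ x : ℝ, 0 < x → x ≤ B →
      P {ω | (t + t⁻¹) * B * x ≤ ∑ i, ξ i ω} ≤ ENNReal.ofReal (Real.exp (-x ^ 2)) := by
  intro x hx hxB
  -- measurable modifications
  set ξ' : Fin N → Ω → ℝ := fun i => (hint i).aestronglyMeasurable.mk (ξ i) with hξ'
  have hae : ∀ i, ξ i =ᵐ[P] ξ' i := fun i => (hint i).aestronglyMeasurable.ae_eq_mk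
  have hmeas' : ∀ i, Measurable (ξ' i) := fun i =>
    (hint i).aestronglyMeasurable.stronglyMeasurable_mk.measurable
  have hindep' : iIndepFun ξ' P := iIndepFun_ae_congr hindep hae
  have hint' : ∀ i, Integrable (ξ' i) P := fun i => (hint i).congr (hae i)
  have hmean' : ∀ i, ∫ ω, ξ' i ω ∂P = 0 := fun i =>
    (integral_congr_ae (hae i)).symm.trans (hmean i)
  have hint2' : ∀ i, Integrable (fun ω => (ξ' i ω) ^ 2 * Real.exp (t * |ξ' i ω|)) P := fun i =>
    (hint2 i).congr ((hae i).mono fun ω h => by simp only [h])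
  set V : Fin N → ℝ := fun i => ∫ ω, (ξ' i ω) ^ 2 * Real.exp (t * |ξ' i ω|) ∂P with hV
  have hVnonneg : ∀ i, 0 ≤ V i := fun i => integral_nonneg fun ω => by positivity
  have hVbound : ∑ i, V i ≤ B ^ 2 := by
    refine le_trans (le_of_eq (Finset.sum_congr rfl fun i _ => ?_)) hbound
    exact integral_congr_ae ((hae i).mono fun ω h => by simp only [h])
  set lam : ℝ := t * x / B with hlam
  have hlam0 : 0 < lam := by positivity
  have hlamt : lam ≤ t := by
    rw [hlam, div_le_iff₀ hB]; nlinarith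
  -- pointwise bound
  have hpt : ∀ u : ℝ, Real.exp (lam * u) ≤ 1 + lam * u + lam ^ 2 * (u ^ 2 * Real.exp (t * |u|)) := by
    intro u
    refine (exp_le_key (lam * u)).trans ?_
    have h1 : (lam * u) ^ 2 * Real.exp |lam * u| ≤ lam ^ 2 * (u ^ 2 * Real.exp (t * |u|)) := by
      rw [mul_pow, abs_mul, abs_of_pos hlam0, mul_assoc]
      exact mul_le_mul_of_nonneg_left (mul_le_mul_of_nonneg_left
        (Real.exp_le_exp.2 (mul_le_mul_of_nonneg_right hlamt (abs_nonneg u)))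
        (sq_nonneg _)) (sq_nonneg _)
    linarith
  -- integrability of exp(lam * ξ' i)
  have iAB : ∀ i, Integrable (fun ω => 1 + lam * ξ' i ω
      + lam ^ 2 * ((ξ' i ω) ^ 2 * Real.exp (t * |ξ' i ω|))) P := fun i => by
    exact ((integrable_const 1).add ((hint' i).const_mul lam)).add
      ((hint2' i).const_mul (lam ^ 2))
  have hintexp : ∀ i, Integrable (fun ω => Real.exp (lam * ξ' i ω)) P := by
    intro i
    refine Integrable.mono' (iAB i) (((hmeas' i).const_mul lam).exp).aestronglyMeasurable ?_
    exact Filter.Eventually.of_forall fun ω => by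
      rw [Real.norm_eq_abs, abs_of_pos (Real.exp_pos _)]; exact hpt (ξ' i ω)
  -- mgf bound per coordinate
  have hmgf : ∀ i, mgf (ξ' i) P lam ≤ Real.exp (lam ^ 2 * V i) := by
    intro i
    have h1 : mgf (ξ' i) P lam ≤ 1 + lam ^ 2 * V i := by
      have := integral_mono (hintexp i) (iAB i) (fun ω => hpt (ξ' i ω))
      calc mgf (ξ' i) P lam = ∫ ω, Real.exp (lam * ξ' i ω) ∂P := rfl
        _ ≤ ∫ ω, (1 + lam * ξ' i ω + lam ^ 2 * ((ξ' i ω) ^ 2 * Real.exp (t * |ξ' i ω|))) ∂P := this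
        _ = 1 + lam ^ 2 * V i := by
            have i1 : Integrable (fun ω => 1 + lam * ξ' i ω) P := by
              exact (integrable_const 1).add ((hint' i).const_mul lam)
            rw [integral_add i1 ((hint2' i).const_mul (lam ^ 2)),
              integral_add (integrable_const 1) ((hint' i).const_mul lam),
              integral_const_mul, integral_const_mul, hmean' i]
            simp [hV]
    exact h1.trans (by have := Real.add_one_le_exp (lam ^ 2 * V i); linarith)
  -- mgf of the sum
  have hintexpsum : Integrable (fun ω => Real.exp (lam * (∑ i, ξ' i) ω)) P :=
    hindep'.integrable_exp_mul_sum hmeas' (fun i _ => hintexp i)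
  have hmgfsum : mgf (∑ i, ξ' i) P lam ≤ Real.exp (lam ^ 2 * B ^ 2) := by
    rw [hindep'.mgf_sum hmeas']
    calc ∏ i, mgf (ξ' i) P lam ≤ ∏ i, Real.exp (lam ^ 2 * V i) :=
          Finset.prod_le_prod (fun i _ => mgf_nonneg) (fun i _ => hmgf i)
      _ = Real.exp (∑ i, lam ^ 2 * V i) := by rw [Real.exp_sum]
      _ ≤ Real.exp (lam ^ 2 * B ^ 2) := by
          apply Real.exp_le_exp.2
          rw [← Finset.mul_sum]
          exact mul_le_mul_of_nonneg_left hVbound (by positivity)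
  -- Chernoff
  have hcher := measure_ge_le_exp_mul_mgf (μ := P) (X := ∑ i, ξ' i) ((t + t⁻¹) * B * x)
    hlam0.le hintexpsum
  have harith : Real.exp (-lam * ((t + t⁻¹) * B * x)) * Real.exp (lam ^ 2 * B ^ 2)
      = Real.exp (-x ^ 2) := by
    rw [← Real.exp_add]
    congr 1
    field_simp [hlam]
    rw [hlam]; field_simp; ring
  have hfinal : (P {ω | (t + t⁻¹) * B * x ≤ (∑ i, ξ' i) ω}).toReal ≤ Real.exp (-x ^ 2) := by
    calc (P {ω | (t + t⁻¹) * B * x ≤ (∑ i, ξ' i) ω}).toReal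
        ≤ Real.exp (-lam * ((t + t⁻¹) * B * x)) * mgf (∑ i, ξ' i) P lam := hcher
      _ ≤ Real.exp (-lam * ((t + t⁻¹) * B * x)) * Real.exp (lam ^ 2 * B ^ 2) := by
          exact mul_le_mul_of_nonneg_left hmgfsum (Real.exp_pos _).le
      _ = Real.exp (-x ^ 2) := harith
  have hsets : P {ω | (t + t⁻¹) * B * x ≤ ∑ i, ξ i ω}
      = P {ω | (t + t⁻¹) * B * x ≤ (∑ i, ξ' i) ω} := by
    have hae' : ∀ᵐ ω ∂P, ∀ i, ξ i ω = ξ' i ω := ae_all_iff.2 hae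
    refine measure_congr (Filter.eventuallyEq_set.2 (hae'.mono fun ω hω => ?_))
    simp only [Set.mem_setOf_eq, Finset.sum_apply]
    rw [Finset.sum_congr rfl fun i _ => hω i]
  rw [hsets, ENNReal.le_ofReal_iff_toReal_le (measure_ne_top P _) (Real.exp_nonneg _)]
  exact hfinal
end

section
/- Let I, D ∈ ℝ^{p×p} satisfy δᵀIδ ≥ λ₋ |δ|₂² for every δ ∈ ℝ^p (λ₋ > 0), and suppose the entrywise bound max_{i,j} |D_{ij} − I_{ij}| ≤ ε holds. Then for every δ ∈ ℝ^p with |δ|₁ ≤ 4√s·|δ|₂ (s a positive integer), δᵀDδ ≥ (λ₋ − 16 s ε) |δ|₂². -/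
open Matrix Finset

/-- if `δᵀIδ ≥ λ₋|δ|₂²` for all `δ` and the entrywise bound
`max_{i,j} |D_{ij} − I_{ij}| ≤ ε` holds, then for every `δ` in the cone
`|δ|₁ ≤ 4√s|δ|₂`, `δᵀDδ ≥ (λ₋ − 16 s ε)|δ|₂²`. -/
theorem stmt14 {p : ℕ} (I D : Matrix (Fin p) (Fin p) ℝ) (lamMinus ε : ℝ)
    (hlam : 0 < lamMinus)
    (hI : ∀ δ : Fin p → ℝ, lamMinus * (l2 δ) ^ 2 ≤ δ ⬝ᵥ I.mulVec δ)
    (hε : ∀ i j, |D i j - I i j| ≤ ε)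
    (s : ℕ) (hs : 0 < s) :
    ∀ δ : Fin p → ℝ, l1 δ ≤ 4 * Real.sqrt (s : ℝ) * l2 δ →
      (lamMinus - 16 * (s : ℝ) * ε) * (l2 δ) ^ 2 ≤ δ ⬝ᵥ D.mulVec δ := by
  intro δ hδ
  rcases Nat.eq_zero_or_pos p with hp | hp
  · subst hp
    simp [l2, dotProduct]
  have hε0 : 0 ≤ ε := le_trans (abs_nonneg _) (hε ⟨0, hp⟩ ⟨0, hp⟩)
  have hl2 : 0 ≤ l2 δ := Real.sqrt_nonneg _
  have hl1 : 0 ≤ l1 δ := Finset.sum_nonneg fun j _ => abs_nonneg _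
  -- bound on the perturbation
  have key : |δ ⬝ᵥ (D - I).mulVec δ| ≤ ε * (l1 δ) ^ 2 := by
    have h1 : δ ⬝ᵥ (D - I).mulVec δ = ∑ i, ∑ j, δ i * ((D i j - I i j) * δ j) := by
      simp [dotProduct, Matrix.mulVec, Finset.mul_sum]
    rw [h1]
    calc |∑ i, ∑ j, δ i * ((D i j - I i j) * δ j)|
        ≤ ∑ i, |∑ j, δ i * ((D i j - I i j) * δ j)| := Finset.abs_sum_le_sum_abs _ _
      _ ≤ ∑ i, ∑ j, |δ i * ((D i j - I i j) * δ j)| :=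
          Finset.sum_le_sum fun i _ => Finset.abs_sum_le_sum_abs _ _
      _ ≤ ∑ i, ∑ j, |δ i| * (ε * |δ j|) := by
          refine Finset.sum_le_sum fun i _ => Finset.sum_le_sum fun j _ => ?_
          rw [abs_mul, abs_mul]
          exact mul_le_mul_of_nonneg_left
            (mul_le_mul_of_nonneg_right (hε i j) (abs_nonneg _)) (abs_nonneg _)
      _ = ε * (l1 δ) ^ 2 := by
          simp only [l1]
          rw [sq, Finset.sum_mul_sum, Finset.mul_sum]
          refine Finset.sum_congr rfl fun i _ => ?_
          rw [Finset.mul_sum]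
          exact Finset.sum_congr rfl fun j _ => by ring
  have hsplit : δ ⬝ᵥ D.mulVec δ = δ ⬝ᵥ I.mulVec δ + δ ⬝ᵥ (D - I).mulVec δ := by
    rw [Matrix.sub_mulVec, dotProduct_sub]; ring
  have hcone : (l1 δ) ^ 2 ≤ 16 * (s : ℝ) * (l2 δ) ^ 2 := by
    have h4 : (0:ℝ) ≤ 4 * Real.sqrt (s : ℝ) * l2 δ := by positivity
    have := mul_self_le_mul_self hl1 hδ
    calc (l1 δ) ^ 2 = l1 δ * l1 δ := sq (l1 δ)
      _ ≤ (4 * Real.sqrt (s:ℝ) * l2 δ) * (4 * Real.sqrt (s:ℝ) * l2 δ) := this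
      _ = 16 * (Real.sqrt (s:ℝ) * Real.sqrt (s:ℝ)) * (l2 δ)^2 := by ring
      _ = 16 * (s:ℝ) * (l2 δ)^2 := by
          rw [Real.mul_self_sqrt (Nat.cast_nonneg s)]
  have hpert : -(16 * (s:ℝ) * ε * (l2 δ)^2) ≤ δ ⬝ᵥ (D - I).mulVec δ := by
    have := (abs_le.mp key).1
    have h2 : ε * (l1 δ)^2 ≤ 16 * (s:ℝ) * ε * (l2 δ)^2 := by
      calc ε * (l1 δ)^2 ≤ ε * (16 * (s:ℝ) * (l2 δ)^2) :=
            mul_le_mul_of_nonneg_left hcone hε0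
        _ = 16 * (s:ℝ) * ε * (l2 δ)^2 := by ring
    linarith
  have := hI δ
  rw [hsplit]
  nlinarith [hpert, this]
end

section
/- Let N, m, s be reals with m ≥ 1, s > 0, N > m, log N > 0, m·log(N/m) > 0, set n = N/m, and assume N²/(m² s⁵ log²(N/m)) > 1. If t ≥ 0 satisfies t ≥ 3·log(m·log(N/m)/log N) / log(N²/(m² s⁵ log²(N/m))), then s^{(5t+3)/6} (log n / n)^{(2t+3)/6} ≤ (s log N / N)^{1/2}. -/
open Real

/-- with `n = N/m`, if `N²/(m² s⁵ log²(N/m)) > 1` and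
`t ≥ 3 log(m log(N/m) / log N) / log(N²/(m² s⁵ log²(N/m)))`, then
`s^{(5t+3)/6} (log n / n)^{(2t+3)/6} ≤ (s log N / N)^{1/2}`. -/
theorem stmt17 (N m s n t : ℝ)
    (hN : 0 < N) (hm : 1 ≤ m) (hs : 0 < s) (hNm : m < N)
    (hlogN : 0 < Real.log N)
    (hmlog : 0 < m * Real.log (N / m))
    (hn : n = N / m)
    (h1 : 1 < N ^ 2 / (m ^ 2 * s ^ 5 * (Real.log (N / m)) ^ 2))
    (ht0 : 0 ≤ t)
    (ht : 3 * Real.log (m * Real.log (N / m) / Real.log N)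
        / Real.log (N ^ 2 / (m ^ 2 * s ^ 5 * (Real.log (N / m)) ^ 2)) ≤ t) :
    s ^ ((5 * t + 3) / 6) * (Real.log n / n) ^ ((2 * t + 3) / 6)
      ≤ (s * Real.log N / N) ^ ((1 : ℝ) / 2) := by
  have hm0 : 0 < m := lt_of_lt_of_le one_pos hm
  have hln : 0 < Real.log (N / m) := by
    by_contra h
    push_neg at h
    nlinarith
  have hn1 : 1 < n := by
    rw [hn]; exact (one_lt_div hm0).mpr hNm
  have hn0 : 0 < n := lt_trans one_pos hn1
  have hlnn : 0 < Real.log n := Real.log_pos hn1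
  have hdiv : 0 < Real.log n / n := div_pos hlnn hn0
  have hR : 0 < s * Real.log N / N := by positivity
  have hL : 0 < Real.log (N ^ 2 / (m ^ 2 * s ^ 5 * (Real.log (N / m)) ^ 2)) :=
    Real.log_pos h1
  have ht' : 3 * Real.log (m * Real.log (N / m) / Real.log N)
      ≤ t * Real.log (N ^ 2 / (m ^ 2 * s ^ 5 * (Real.log (N / m)) ^ 2)) := by
    rw [div_le_iff₀ hL] at ht
    linarith
  have eL : Real.log (N ^ 2 / (m ^ 2 * s ^ 5 * (Real.log (N / m)) ^ 2))
      = 2 * Real.log N - (2 * Real.log m + 5 * Real.log s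
        + 2 * Real.log (Real.log (N / m))) := by
    rw [Real.log_div (by positivity) (by positivity),
      Real.log_mul (by positivity) (by positivity),
      Real.log_mul (by positivity) (by positivity),
      Real.log_pow, Real.log_pow, Real.log_pow, Real.log_pow]
    push_cast
    ring
  have eA : Real.log (m * Real.log (N / m) / Real.log N)
      = Real.log m + Real.log (Real.log (N / m)) - Real.log (Real.log N) := by
    rw [Real.log_div (by positivity) (ne_of_gt hlogN),
      Real.log_mul (ne_of_gt hm0) (ne_of_gt hln)]
  have en : Real.log n = Real.log N - Real.log m := by
    rw [hn, Real.log_div (ne_of_gt hN) (ne_of_gt hm0)]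
  have elnn : Real.log (Real.log n) = Real.log (Real.log (N / m)) := by rw [hn]
  rw [eL, eA] at ht'
  rw [Real.rpow_def_of_pos hs, Real.rpow_def_of_pos hdiv,
    Real.rpow_def_of_pos hR, ← Real.exp_add, Real.exp_le_exp,
    Real.log_div (ne_of_gt hlnn) (ne_of_gt hn0),
    Real.log_div (by positivity) (ne_of_gt hN),
    Real.log_mul (ne_of_gt hs) (ne_of_gt hlogN), elnn, en]
  nlinarith [ht']
end

section
/- Let S ⊆ {1,…,p}. Suppose β̃ minimizes F over the subspace {β ∈ ℝ^p : βⱼ = 0 for all j ∉ S}, and suppose |(Aβ̃ − a)ⱼ| ≤ λ for every j ∉ S. Then β̃ is a global minimizer of F over all of ℝ^p. -/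
open Matrix Finset

private lemma aux_le_zero (x K : ℝ) (hK : 0 ≤ K)
    (h : ∀ s : ℝ, 0 < s → s ≤ 1 → x ≤ s * K) : x ≤ 0 := by
  have : ∀ ε : ℝ, 0 < ε → x ≤ 0 + ε := by
    intro ε hε
    have hs : (0:ℝ) < min 1 (ε / (K + 1)) := by positivity
    have h1 : x ≤ min 1 (ε / (K + 1)) * K := h _ hs (min_le_left _ _)
    have h2 : min 1 (ε / (K + 1)) * K ≤ (ε / (K + 1)) * K :=
      mul_le_mul_of_nonneg_right (min_le_right _ _) hK
    have h3 : (ε / (K + 1)) * K ≤ ε := by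
      rw [div_mul_eq_mul_div, div_le_iff₀ (by linarith)]
      nlinarith
    linarith
  exact le_of_forall_pos_le_add this

/-- primal–dual witness. If `β̃` minimizes `F` over vectors supported
on `S` and the dual feasibility `|(Aβ̃ − a)ⱼ| ≤ λ` holds for every `j ∉ S`, then `β̃`
is a global minimizer of `F` over all of `ℝ^p`. -/
theorem stmt19 {p : ℕ} (hp : 1 ≤ p) (A : Matrix (Fin p) (Fin p) ℝ) (hA : A.PosSemidef)
    (a : Fin p → ℝ) (lam : ℝ) (hlam : 0 < lam)
    (S : Finset (Fin p)) (βtilde : Fin p → ℝ)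
    (hsupp : ∀ j ∉ S, βtilde j = 0)
    (hmin : ∀ β : Fin p → ℝ, (∀ j ∉ S, β j = 0) → Fobj A a lam βtilde ≤ Fobj A a lam β)
    (hdual : ∀ j ∉ S, |(A.mulVec βtilde - a) j| ≤ lam) :
    ∀ β : Fin p → ℝ, Fobj A a lam βtilde ≤ Fobj A a lam β := by
  set g : Fin p → ℝ := fun j => A.mulVec βtilde j - a j with hgdef
  have hAsymm : Aᵀ = A := by
    have := hA.1
    rwa [Matrix.IsHermitian, Matrix.conjTranspose_eq_transpose_of_trivial] at this
  have hsym : ∀ v w : Fin p → ℝ, v ⬝ᵥ A.mulVec w = w ⬝ᵥ A.mulVec v := by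
    intro v w
    rw [Matrix.dotProduct_mulVec, ← Matrix.mulVec_transpose, hAsymm, dotProduct_comm]
  -- expansion lemma
  have expand : ∀ d : Fin p → ℝ, Fobj A a lam (βtilde + d)
      = Fobj A a lam βtilde + (∑ j, d j * g j) + (1/2) * (d ⬝ᵥ A.mulVec d)
        + lam * (l1 (βtilde + d) - l1 βtilde) := by
    intro d
    have h1 : (βtilde + d) ⬝ᵥ A.mulVec (βtilde + d)
        = βtilde ⬝ᵥ A.mulVec βtilde + 2 * (d ⬝ᵥ A.mulVec βtilde) + d ⬝ᵥ A.mulVec d := by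
      simp only [Matrix.mulVec_add, dotProduct_add, add_dotProduct]
      rw [hsym βtilde d]
      ring
    have h2 : ∑ j, d j * g j = d ⬝ᵥ A.mulVec βtilde - d ⬝ᵥ a := by
      simp only [hgdef, dotProduct, ← Finset.sum_sub_distrib, mul_sub]
    have h3 : (βtilde + d) ⬝ᵥ a = βtilde ⬝ᵥ a + d ⬝ᵥ a := add_dotProduct _ _ _
    simp only [Fobj, h1, h2, h3]
    ring
  have hdiag : ∀ j, 0 ≤ A j j := by
    intro j
    have := hA.dotProduct_mulVec_nonneg (Pi.single j 1)
    simpa [Matrix.mulVec_single] using this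
  -- KKT inequality from hmin
  have KKT : ∀ j ∈ S, ∀ t : ℝ,
      0 ≤ t * g j + (1/2) * (t * (A j j * t)) + lam * (|βtilde j + t| - |βtilde j|) := by
    intro j hj t
    have hsup : ∀ k ∉ S, (βtilde + Pi.single j t : Fin p → ℝ) k = 0 := by
      intro k hk
      have hkj : k ≠ j := fun h => hk (h ▸ hj)
      simp [hsupp k hk, Pi.single_eq_of_ne hkj]
    have hm := hmin _ hsup
    rw [expand (Pi.single j t)] at hm
    have e1 : ∑ k, (Pi.single j t : Fin p → ℝ) k * g k = t * g j := by
      rw [Finset.sum_eq_single j]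
      · simp
      · intro k _ hkj; simp [Pi.single_eq_of_ne hkj]
      · simp
    have e2 : (Pi.single j t : Fin p → ℝ) ⬝ᵥ A.mulVec (Pi.single j t) = t * (A j j * t) := by
      simp [Matrix.mulVec_single]
      left; ring
    have e3 : l1 (βtilde + Pi.single j t) - l1 βtilde = |βtilde j + t| - |βtilde j| := by
      simp only [l1, ← Finset.sum_sub_distrib]
      rw [Finset.sum_eq_single j]
      · simp
      · intro k _ hkj; simp [Pi.single_eq_of_ne hkj]
      · simp
    rw [e1, e2, e3] at hm
    linarith
  -- derive per-coordinate conditions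
  have cond1 : ∀ j, |g j| ≤ lam := by
    intro j
    by_cases hj : j ∈ S
    · have : |g j| - lam ≤ 0 := by
        refine aux_le_zero _ (A j j / 2) (by linarith [hdiag j]) ?_
        intro s hs hs1
        set sgn : ℝ := if 0 ≤ g j then 1 else -1 with hsgn
        set t : ℝ := -s * sgn with ht
        have h1 := KKT j hj t
        have habs : |βtilde j + t| - |βtilde j| ≤ |t| := by
          have := abs_add_le (βtilde j) t
          have := abs_sub_abs_le_abs_sub (βtilde j + t) (βtilde j)
          simp only [add_sub_cancel_left] at this
          linarith
        have htabs : |t| = s := by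
          rw [ht, hsgn]; split_ifs <;> simp [abs_of_pos hs, abs_mul, abs_of_nonneg hs.le]
        have htg : t * g j = -s * |g j| := by
          rw [ht, hsgn]; split_ifs with h
          · rw [abs_of_nonneg h]; ring
          · rw [abs_of_neg (not_le.mp h)]; ring
        have ht2 : t * (A j j * t) = s^2 * A j j := by
          rw [ht, hsgn]; split_ifs <;> ring
        rw [htg, ht2] at h1
        nlinarith [htabs ▸ habs]
      linarith
    · exact hdual j hj
  have cond2 : ∀ j, g j * βtilde j + lam * |βtilde j| ≤ 0 := by
    intro j
    by_cases hj : j ∈ S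
    · refine aux_le_zero _ (βtilde j ^ 2 * A j j / 2) (by nlinarith [hdiag j, sq_nonneg (βtilde j)]) ?_
      intro s hs hs1
      have h1 := KKT j hj (-s * βtilde j)
      have habs : |βtilde j + -s * βtilde j| = (1 - s) * |βtilde j| := by
        have : βtilde j + -s * βtilde j = (1 - s) * βtilde j := by ring
        rw [this, abs_mul, abs_of_nonneg (by linarith : (0:ℝ) ≤ 1 - s)]
      rw [habs] at h1
      nlinarith
    · simp [hsupp j hj]
  -- final assembly
  intro β
  have hβ : β = βtilde + (β - βtilde) := by ring
  rw [hβ, expand (β - βtilde)]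
  have hquad : 0 ≤ (β - βtilde) ⬝ᵥ A.mulVec (β - βtilde) := by simpa using hA.dotProduct_mulVec_nonneg (β - βtilde)
  have hlin : 0 ≤ (∑ j, (β - βtilde) j * g j) + lam * (l1 (βtilde + (β - βtilde)) - l1 βtilde) := by
    have hβ' : βtilde + (β - βtilde) = β := by ring
    rw [hβ']
    have : (∑ j, (β - βtilde) j * g j) + lam * (l1 β - l1 βtilde)
        = ∑ j, ((β - βtilde) j * g j + lam * (|β j| - |βtilde j|)) := by
      simp only [l1, Finset.sum_add_distrib, ← Finset.sum_sub_distrib, Finset.mul_sum]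
    rw [this]
    refine Finset.sum_nonneg fun j _ => ?_
    have h1 : -(lam * |β j|) ≤ g j * β j := by
      have := neg_abs_le (g j * β j)
      have h2 : |g j * β j| ≤ lam * |β j| := by
        rw [abs_mul]
        exact mul_le_mul_of_nonneg_right (cond1 j) (abs_nonneg _)
      linarith
    have h2 := cond2 j
    have h3 : (β - βtilde) j = β j - βtilde j := rfl
    rw [h3]
    nlinarith
  linarith
end
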